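/- For every integer n ≥ 3, there is a factor of the Thue–Morse word t of length 2^{n-3}+2 that is not a factor of μ^{n-1}(a); explicitly, the word t₁(μ^{n-3}(b))·μ^{n-3}(a)·b is such a factor, where t₁(u) denotes the last letter of u. -/

import Mathlib

def mu (w : List Bool) : List Bool := w.flatMap (fun x => [x, !x])

def tm (n : ℕ) : Bool := (Nat.digits 2 n).sum % 2 == 1

def IsFactorTM (w : List Bool) : Prop :=
  ∃ i : ℕ, w = (List.range w.length).map (fun k => tm (i + k))

def subst (fa fb : List Bool) (w : List Bool) : List Bool :=
  w.flatMap (fun x => if x then fb else fa)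

lemma tm_zero : tm 0 = false := by simp [tm]

lemma tm_two_mul (k : ℕ) : tm (2*k) = tm k := by
  rcases Nat.eq_zero_or_pos k with h|h
  · simp [h]
  · unfold tm
    rw [Nat.digits_def' (by norm_num : (1:ℕ) < 2) (by omega)]
    simp [Nat.mul_div_cancel_left _ (by norm_num : 0 < 2), Nat.mul_mod_right]

lemma tm_two_mul_add_one (k : ℕ) : tm (2*k+1) = !tm k := by
  unfold tm
  rw [Nat.digits_def' (by norm_num : (1:ℕ) < 2) (by omega)]
  simp only [List.sum_cons, show (2*k+1) % 2 = 1 by omega, show (2*k+1)/2 = k by omega]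
  obtain h | h := Nat.mod_two_eq_zero_or_one ((Nat.digits 2 k).sum) <;>
    rw [Nat.add_mod, h] <;> simp

lemma tm_addMul : ∀ (m a r : ℕ), r < 2^m → tm (a * 2^m + r) = xor (tm a) (tm r)
  | 0, a, r, h => by
    interval_cases r
    simp [tm_zero]
  | (m+1), a, r, h => by
    have hpow : (2:ℕ)^(m+1) = 2 * 2^m := by ring
    have ha : a * 2^(m+1) = 2 * (a * 2^m) := by rw [hpow]; ring
    rcases Nat.even_or_odd r with ⟨s, hs⟩ | ⟨s, hs⟩
    · have hs' : s < 2^m := by omega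
      rw [show a * 2^(m+1) + r = 2 * (a * 2^m + s) by omega, tm_two_mul,
        tm_addMul m a s hs', hs, show s + s = 2 * s by omega, tm_two_mul]
    · have hs' : s < 2^m := by omega
      rw [show a * 2^(m+1) + r = 2 * (a * 2^m + s) + 1 by omega, tm_two_mul_add_one,
        tm_addMul m a s hs', hs, tm_two_mul_add_one]
      cases tm a <;> cases tm s <;> rfl

lemma list_range_two_mul : ∀ N : ℕ,
    List.range (2*N) = (List.range N).flatMap (fun k => [2*k, 2*k+1])
  | 0 => rfl
  | (N+1) => by
    rw [show 2*(N+1) = (2*N+1)+1 by ring, List.range_succ, List.range_succ,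
      List.range_succ, list_range_two_mul N]
    simp

lemma mu_pow : ∀ (m : ℕ) (c : Bool),
    mu^[m] [c] = (List.range (2^m)).map (fun k => xor c (tm k))
  | 0, c => by norm_num [List.range_succ, tm_zero]
  | (m+1), c => by
    rw [Function.iterate_succ_apply', mu_pow m c, pow_succ,
      show (2:ℕ)^m * 2 = 2 * 2^m by ring, list_range_two_mul]
    unfold mu
    rw [List.flatMap_map, List.map_flatMap]
    congr 1
    funext k
    simp only [List.map_cons, List.map_nil, Function.comp]
    rw [tm_two_mul, tm_two_mul_add_one]
    cases c <;> cases tm k <;> rfl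

lemma len_mu_pow (m : ℕ) (c : Bool) : (mu^[m] [c]).length = 2^m := by
  rw [mu_pow]; simp

lemma mu_pow_false (m : ℕ) : mu^[m] [false] = (List.range (2^m)).map tm := by
  rw [mu_pow]; simp

lemma getLast!_map_range (f : ℕ → Bool) (N : ℕ) (h : 0 < N) :
    ((List.range N).map f).getLast! = f (N-1) := by
  obtain ⟨K, rfl⟩ : ∃ K, N = K + 1 := ⟨N-1, by omega⟩
  rw [List.range_succ, List.map_append, List.map_singleton]
  simpa using List.getLast!_of_getLast? (List.getLast?_concat _)

lemma getLast_mu_pow_true (m : ℕ) : (mu^[m] [true]).getLast! = !tm (2^m - 1) := by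
  rw [mu_pow, getLast!_map_range _ _ (by positivity), Bool.true_xor]

lemma map_range_decomp (F : ℕ → Bool) (N : ℕ) :
    (List.range (N+2)).map F = [F 0] ++ (List.range N).map (fun j => F (j+1)) ++ [F (N+1)] := by
  rw [List.range_succ, List.range_succ_eq_map]
  simp [Function.comp]

lemma tm_one : tm 1 = true := by simp [tm]
lemma tm_two : tm 2 = true := by simp [tm]
lemma tm_three : tm 3 = false := by simp [tm]
lemma tm_four : tm 4 = true := by simp [tm]
lemma tm_five : tm 5 = false := by simp [tm]
lemma tm_six : tm 6 = false := by simp [tm]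
lemma tm_eleven : tm 11 = true := by simp [tm]
lemma tm_twelve : tm 12 = false := by simp [tm]
lemma tm_thirteen : tm 13 = true := by simp [tm]

def Q (m : ℕ) : Prop := ∃ p : ℕ, p + 2^m + 2 ≤ 2^(m+2) ∧ tm p = !tm (2^m - 1) ∧
  (∀ j < 2^m, tm (p+1+j) = tm j) ∧ tm (p + 2^m + 1) = true

lemma not_Q : ∀ m, ¬ Q m
  | 0 => by
    rintro ⟨p, h1, h2, h3, h4⟩
    have e := h3 0 (by norm_num)
    have hp : p ≤ 1 := by
      have : p + 2^0 + 2 ≤ 2^2 := h1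
      norm_num at this; omega
    interval_cases p <;> simp_all [tm_zero, tm_one, tm_two]
  | 1 => by
    rintro ⟨p, h1, h2, h3, h4⟩
    have e0 := h3 0 (by norm_num)
    have e1 := h3 1 (by norm_num)
    have hp : p ≤ 4 := by
      have : p + 2^1 + 2 ≤ 2^3 := h1
      norm_num at this; omega
    interval_cases p <;>
      simp_all [tm_zero, tm_one, tm_two, tm_three, tm_four, tm_five, tm_six]
  | (m+2) => by
    rintro ⟨p, h1, h2, h3, h4⟩
    apply not_Q (m+1)
    rcases Nat.even_or_odd p with ⟨q, hq⟩ | ⟨q, hq⟩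
    · exfalso
      have hlt : (2:ℕ) < 2^(m+2) := by
        calc (2:ℕ) < 4 := by norm_num
        _ = 2^2 := by norm_num
        _ ≤ 2^(m+2) := Nat.pow_le_pow_right (by norm_num) (by omega)
      have e1 := h3 1 (by omega)
      have e2 := h3 2 hlt
      rw [tm_one] at e1
      rw [tm_two] at e2
      rw [show p + 1 + 1 = 2 * (q + 1) by omega, tm_two_mul] at e1
      rw [show p + 1 + 2 = 2 * (q + 1) + 1 by omega, tm_two_mul_add_one, e1] at e2
      simp at e2
    · refine ⟨q, ?_, ?_, ?_, ?_⟩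
      · have e4 : (2:ℕ)^(m+2+2) = 16 * 2^m := by ring
        have e2 : (2:ℕ)^(m+2) = 4 * 2^m := by ring
        have e3 : (2:ℕ)^(m+1+2) = 8 * 2^m := by ring
        have e1' : (2:ℕ)^(m+1) = 2 * 2^m := by ring
        rw [e4, e2] at h1
        rw [e3, e1']
        omega
      · rw [show p = 2 * q + 1 by omega, tm_two_mul_add_one] at h2
        have hbig : 2^(m+2) - 1 = 2 * (2^(m+1) - 1) + 1 := by
          have h1' : (1:ℕ) ≤ 2^(m+1) := Nat.one_le_two_pow
          have : (2:ℕ)^(m+2) = 2 * 2^(m+1) := by ring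
          omega
        rw [hbig, tm_two_mul_add_one] at h2
        have := congrArg (fun b => !b) h2
        simpa using this
      · intro j hj
        have hj' : 2 * j < 2^(m+2) := by
          have : (2:ℕ)^(m+2) = 2 * 2^(m+1) := by ring
          omega
        have e := h3 (2*j) hj'
        rw [tm_two_mul, show p + 1 + 2*j = 2 * (q + 1 + j) by omega, tm_two_mul] at e
        exact e
      · rw [show p + 2^(m+2) + 1 = 2 * (q + 2^(m+1) + 1) by
          have : (2:ℕ)^(m+2) = 2 * 2^(m+1) := by ring
          omega, tm_two_mul] at h4
        exact h4

/-- For n ≥ 3, the word t₁(μ^{n-3}(b))·μ^{n-3}(a)·b has length 2^{n-3}+2, is a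
    factor of t, but is not a factor of μ^{n-1}(a). -/
theorem exists_factor_not_in_mu_pow (n : ℕ) (hn : 3 ≤ n) :
    IsFactorTM ([(mu^[n - 3] [true]).getLast!] ++ mu^[n - 3] [false] ++ [true]) ∧
    ¬ ([(mu^[n - 3] [true]).getLast!] ++ mu^[n - 3] [false] ++ [true])
        <:+: mu^[n - 1] [false] ∧
    ([(mu^[n - 3] [true]).getLast!] ++ mu^[n - 3] [false] ++ [true]).length
        = 2 ^ (n - 3) + 2 := by
  obtain ⟨m, rfl⟩ : ∃ m, n = m + 3 := ⟨n - 3, by omega⟩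
  rw [show m + 3 - 3 = m from by omega, show m + 3 - 1 = m + 2 from by omega]
  have hpos : (1:ℕ) ≤ 2^m := Nat.one_le_two_pow
  have hlen : ([(mu^[m] [true]).getLast!] ++ mu^[m] [false] ++ [true]).length = 2^m + 2 := by
    simp [len_mu_pow]
  refine ⟨?_, ?_, hlen⟩
  · -- factor of t at position 12*2^m - 1
    refine ⟨12 * 2^m - 1, ?_⟩
    rw [hlen]
    simp only [map_range_decomp]
    rw [getLast_mu_pow_true, mu_pow_false]
    congr 1
    · congr 1
      · rw [show 12 * 2^m - 1 + 0 = 11 * 2^m + (2^m - 1) by omega,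
          tm_addMul m 11 (2^m - 1) (by omega), tm_eleven, Bool.true_xor]
      · apply List.map_congr_left
        intro j hj
        rw [List.mem_range] at hj
        rw [show 12 * 2^m - 1 + (j+1) = 12 * 2^m + j by omega,
          tm_addMul m 12 j hj, tm_twelve, Bool.false_xor]
    · rw [show 12 * 2^m - 1 + (2^m + 1) = 13 * 2^m + 0 by omega,
        tm_addMul m 13 0 (by omega), tm_thirteen, tm_zero]
      rfl
  · -- not an infix of mu^[m+2] [false]
    intro hinf
    apply not_Q m
    obtain ⟨s, u, hsu⟩ := hinf
    have hL := congrArg List.length hsu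
    rw [List.length_append, List.length_append, hlen, len_mu_pow] at hL
    have hsu' : s ++ (([(mu^[m] [true]).getLast!] ++ mu^[m] [false] ++ [true]) ++ u)
        = (List.range (2^(m+2))).map tm := by
      rw [← List.append_assoc, hsu, mu_pow_false]
    have hidx : ∀ k, ∀ _hk : k < 2^m + 2,
        tm (s.length + k)
          = ([(mu^[m] [true]).getLast!] ++ mu^[m] [false] ++ [true])[k]'(by
              rw [hlen]; omega) := by
      intro k hk
      have hk2 : s.length + k < 2^(m+2) := by omega
      have hlt : s.length + k
          < (s ++ (([(mu^[m] [true]).getLast!] ++ mu^[m] [false] ++ [true]) ++ u)).length := by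
        rw [hsu']; simpa using hk2
      have base := List.getElem_of_eq hsu' hlt
      rw [List.getElem_map, List.getElem_range] at base
      rw [← base, List.getElem_append_right (by omega),
        List.getElem_append_left (by rw [hlen]; omega)]
      congr 1
      omega
    have w0 : ([(mu^[m] [true]).getLast!] ++ mu^[m] [false] ++ [true])[0]'(by
        rw [hlen]; omega) = !tm (2^m - 1) := by
      rw [List.getElem_append_left (by
            simp only [List.length_append, List.length_singleton, len_mu_pow]; omega),
        List.getElem_append_left (by simp only [List.length_singleton]; omega)]
      simp only [List.getElem_singleton]; exact getLast_mu_pow_true m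
    have wj : ∀ j, (hj : j < 2^m) →
        ([(mu^[m] [true]).getLast!] ++ mu^[m] [false] ++ [true])[1+j]'(by
          rw [hlen]; omega) = tm j := by
      intro j hj
      rw [List.getElem_append_left (by
            simp only [List.length_append, List.length_singleton, len_mu_pow]; omega),
        List.getElem_append_right (by simp only [List.length_singleton]; omega)]
      simp only [mu_pow_false, List.getElem_map, List.getElem_range]
      congr 1
      simp only [List.length_singleton]
      omega
    have wlast : ([(mu^[m] [true]).getLast!] ++ mu^[m] [false] ++ [true])[2^m+1]'(by
        rw [hlen]; omega) = true := by
      rw [List.getElem_append_right (by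
        simp only [List.length_append, List.length_singleton, len_mu_pow]; omega)]
      simp
    refine ⟨s.length, by omega, ?_, ?_, ?_⟩
    · have h0 := hidx 0 (by omega)
      rw [Nat.add_zero] at h0
      exact h0.trans w0
    · intro j hj
      have h1 := hidx (1 + j) (by omega)
      rw [show s.length + (1 + j) = s.length + 1 + j by omega] at h1
      exact h1.trans (wj j hj)
    · have h2 := hidx (2^m + 1) (by omega)
      rw [show s.length + (2^m + 1) = s.length + 2^m + 1 by omega] at h2
      exact h2.trans wlast
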